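/- arXiv:2401.01064 — 2 statements merged into one kernel-verified Lean document; each statement's English description precedes it below -/
import Mathlib

section
/- Let H be a J×K real matrix with H H^T positive definite, ϖ a K×K real matrix, and t ∈ R^K. Then the quantity t^T H^T (H H^T)^{-1} H ϖ ϖ^T H^T (H(I_K + ϖϖ^T)H^T)^{-1} H t is nonnegative; moreover it is strictly positive whenever ϖ^T H^T (H H^T)^{-1} H t ≠ 0. -/
open Matrix

private lemma symm_dot {n : ℕ} {A : Matrix (Fin n) (Fin n) ℝ} (hA : Aᵀ = A)
    (x y : Fin n → ℝ) : x ⬝ᵥ (A *ᵥ y) = (A *ᵥ x) ⬝ᵥ y := by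
  rw [dotProduct_mulVec, ← mulVec_transpose, hA]

private lemma dot_transpose {m n : ℕ} (A : Matrix (Fin m) (Fin n) ℝ)
    (x : Fin n → ℝ) (y : Fin m → ℝ) : x ⬝ᵥ (Aᵀ *ᵥ y) = (A *ᵥ x) ⬝ᵥ y := by
  rw [dotProduct_mulVec, vecMul_transpose]

/-- Nonnegativity (and strict positivity on a nondegeneracy condition) of the
variance-enlargement term `tᵀ Hᵀ (HHᵀ)⁻¹ H ϖ ϖᵀ Hᵀ (H(I+ϖϖᵀ)Hᵀ)⁻¹ H t`. -/
theorem vee_term_nonneg (J K : ℕ)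
    (H : Matrix (Fin J) (Fin K) ℝ) (ϖ : Matrix (Fin K) (Fin K) ℝ) (t : Fin K → ℝ)
    (hpd : (H * Hᵀ).PosDef) :
    0 ≤ t ⬝ᵥ ((Hᵀ * (H * Hᵀ)⁻¹ * H * ϖ * ϖᵀ * Hᵀ
          * (H * (1 + ϖ * ϖᵀ) * Hᵀ)⁻¹ * H) *ᵥ t)
    ∧ ((ϖᵀ * Hᵀ * (H * Hᵀ)⁻¹ * H) *ᵥ t ≠ 0 →
        0 < t ⬝ᵥ ((Hᵀ * (H * Hᵀ)⁻¹ * H * ϖ * ϖᵀ * Hᵀ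
          * (H * (1 + ϖ * ϖᵀ) * Hᵀ)⁻¹ * H) *ᵥ t)) := by
  set S := H * Hᵀ with hS
  set M := H * ϖ * ϖᵀ * Hᵀ with hM
  set T := H * (1 + ϖ * ϖᵀ) * Hᵀ with hT
  have hTSM : T = S + M := by
    rw [hT, hS, hM, Matrix.mul_add, Matrix.mul_one, Matrix.add_mul, ← Matrix.mul_assoc]
  have hMeq : M = (H * ϖ) * (H * ϖ)ᵀ := by
    rw [hM, transpose_mul, ← Matrix.mul_assoc]
  have hMpsd : M.PosSemidef := by
    rw [hMeq, ← conjTranspose_eq_transpose_of_trivial]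
    exact posSemidef_self_mul_conjTranspose _
  have hTpd : T.PosDef := hTSM ▸ hpd.add_posSemidef hMpsd
  have hSinv : S⁻¹.PosDef := hpd.inv
  have hSsym : Sᵀ = S := by
    conv_rhs => rw [← hpd.isHermitian.eq]
    rw [conjTranspose_eq_transpose_of_trivial]
  have hMsym : Mᵀ = M := by rw [hMeq, transpose_mul, transpose_transpose]
  have hTsym : Tᵀ = T := by rw [hTSM, transpose_add, hSsym, hMsym]
  have hTT : T * T⁻¹ = 1 := mul_nonsing_inv T ((isUnit_iff_isUnit_det T).mp hTpd.isUnit)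
  have hSS : S * S⁻¹ = 1 := mul_nonsing_inv S ((isUnit_iff_isUnit_det S).mp hpd.isUnit)
  set u := H *ᵥ t with hu
  set w := T⁻¹ *ᵥ u with hw
  have huw : u = T *ᵥ w := by rw [hw, mulVec_mulVec, hTT, one_mulVec]
  have hq : t ⬝ᵥ ((Hᵀ * S⁻¹ * H * ϖ * ϖᵀ * Hᵀ * T⁻¹ * H) *ᵥ t)
      = w ⬝ᵥ (M *ᵥ w) + (M *ᵥ w) ⬝ᵥ (S⁻¹ *ᵥ (M *ᵥ w)) := by
    have e1 : Hᵀ * S⁻¹ * H * ϖ * ϖᵀ * Hᵀ * T⁻¹ * H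
        = Hᵀ * (S⁻¹ * M * T⁻¹ * H) := by
      simp only [hM, Matrix.mul_assoc]
    rw [e1, ← mulVec_mulVec, dotProduct_mulVec t Hᵀ _, vecMul_transpose, ← hu]
    have e2 : (S⁻¹ * M * T⁻¹ * H) *ᵥ t = (S⁻¹ * M) *ᵥ w := by
      rw [hw, hu]
      simp only [← mulVec_mulVec]
    rw [e2, huw, ← symm_dot hTsym, mulVec_mulVec, ← Matrix.mul_assoc]
    have e3 : T * S⁻¹ * M = M + M * S⁻¹ * M := by
      rw [hTSM, Matrix.add_mul, Matrix.add_mul, hSS, Matrix.one_mul]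
    rw [e3, add_mulVec, dotProduct_add]
    congr 1
    rw [Matrix.mul_assoc, ← mulVec_mulVec, symm_dot hMsym]
    simp only [hM, ← mulVec_mulVec]
  have h1 : 0 ≤ w ⬝ᵥ (M *ᵥ w) := by simpa using hMpsd.dotProduct_mulVec_nonneg w
  have h2 : 0 ≤ (M *ᵥ w) ⬝ᵥ (S⁻¹ *ᵥ (M *ᵥ w)) := by simpa using hSinv.posSemidef.dotProduct_mulVec_nonneg (M *ᵥ w)
  constructor
  · rw [hq]; positivity
  · intro hv
    rw [hq]
    rcases eq_or_ne (M *ᵥ w) 0 with h0 | h0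
    · exfalso
      apply hv
      have huS : u = S *ᵥ w := by rw [huw, hTSM, add_mulVec, h0, add_zero]
      have hwu : w = S⁻¹ *ᵥ u := by
        rw [huS, mulVec_mulVec, nonsing_inv_mul S ((isUnit_iff_isUnit_det S).mp hpd.isUnit),
          one_mulVec]
      set v := (ϖᵀ * Hᵀ * S⁻¹ * H) *ᵥ t with hvdef
      have hvw : v = (ϖᵀ * Hᵀ) *ᵥ w := by
        rw [hvdef, hwu, hu]
        simp only [← mulVec_mulVec]
      have hMwv : (H * ϖ) *ᵥ v = M *ᵥ w := by
        rw [hvw, mulVec_mulVec]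
        simp only [hM, Matrix.mul_assoc]
      have hv0 : v ⬝ᵥ v = 0 := by
        nth_rewrite 2 [hvw]
        rw [← transpose_mul, dot_transpose, hMwv, h0, zero_dotProduct]
      exact dotProduct_self_eq_zero.mp hv0
    · have h2' : 0 < (M *ᵥ w) ⬝ᵥ (S⁻¹ *ᵥ (M *ᵥ w)) := by simpa using hSinv.dotProduct_mulVec_pos (x := M *ᵥ w) h0
      positivity
end

section
/- Let ρ and ρ_z be distinct real numbers and (v_t)_{t≥1} a real sequence. Define x_t by x_0 = 0, x_t = ρ x_{t−1} + v_t, and define z_t by z_0 = 0, z_t = ρ_z z_{t−1} + (x_t − x_{t−1}). Then for all t ≥ 1, z_t = Σ_{j=1}^{t} c_{j,t} v_j, where c_{j,t} = (ρ_z^{t−j}(1 − ρ_z) − ρ^{t−j}(1 − ρ)) / (ρ − ρ_z). -/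
open Finset

/-- Closed-form moving-average representation of the IVX instrument:
`z_t = ∑_{j=1}^t c_{j,t} v_j` with
`c_{j,t} = (ρ_z^{t−j}(1−ρ_z) − ρ^{t−j}(1−ρ))/(ρ − ρ_z)`. -/
theorem ivx_instrument_ma_representation (ρ ρz : ℝ) (hne : ρ ≠ ρz)
    (v x z : ℕ → ℝ)
    (hx0 : x 0 = 0) (hx : ∀ t ≥ 1, x t = ρ * x (t - 1) + v t)
    (hz0 : z 0 = 0) (hz : ∀ t ≥ 1, z t = ρz * z (t - 1) + (x t - x (t - 1))) :
    ∀ t ≥ 1,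
      z t = ∑ j ∈ Finset.Icc 1 t,
        ((ρz ^ (t - j) * (1 - ρz) - ρ ^ (t - j) * (1 - ρ)) / (ρ - ρz)) * v j := by
  have hρ : ρ - ρz ≠ 0 := sub_ne_zero.mpr hne
  have hxsum : ∀ t, x t = ∑ j ∈ Finset.Icc 1 t, ρ ^ (t - j) * v j := by
    intro t
    induction t with
    | zero => simp [hx0]
    | succ t ih =>
      rw [hx (t + 1) (by omega)]
      simp only [Nat.add_sub_cancel]
      rw [Finset.sum_Icc_succ_top (by omega), ih, Finset.mul_sum]
      simp only [Nat.sub_self, pow_zero, one_mul]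
      congr 1
      refine Finset.sum_congr rfl fun j hj => ?_
      have hj' : j ≤ t := (Finset.mem_Icc.mp hj).2
      have h : t + 1 - j = (t - j) + 1 := by omega
      rw [h, pow_succ]; ring
  intro t ht
  induction t, ht using Nat.le_induction with
  | base =>
    have hx1 : x 1 = v 1 := by rw [hx 1 le_rfl]; simp [hx0]
    rw [hz 1 le_rfl]
    simp [hz0, hx1, hx0]
    field_simp
  | succ t ht ih =>
    rw [hz (t + 1) (by omega)]
    simp only [Nat.add_sub_cancel]
    rw [ih, hx (t + 1) (by omega)]
    simp only [Nat.add_sub_cancel]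
    rw [hxsum t, Finset.sum_Icc_succ_top (show 1 ≤ t + 1 by omega)]
    simp only [Nat.sub_self, pow_zero, one_mul]
    have hc : (1 - ρz - (1 - ρ)) / (ρ - ρz) = 1 := by field_simp; ring
    rw [hc, one_mul]
    have key : ∀ j ∈ Finset.Icc 1 t,
        ρz * (((ρz ^ (t - j) * (1 - ρz) - ρ ^ (t - j) * (1 - ρ)) / (ρ - ρz)) * v j)
          + (ρ - 1) * (ρ ^ (t - j) * v j)
        = ((ρz ^ (t + 1 - j) * (1 - ρz) - ρ ^ (t + 1 - j) * (1 - ρ)) / (ρ - ρz)) * v j := by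
      intro j hj
      have hj' : j ≤ t := (Finset.mem_Icc.mp hj).2
      have h : t + 1 - j = (t - j) + 1 := by omega
      rw [h, pow_succ, pow_succ]
      field_simp
      ring
    rw [← Finset.sum_congr rfl key, Finset.sum_add_distrib, ← Finset.mul_sum, ← Finset.mul_sum]
    ring
end
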